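/- Let X, Y, Z be discrete random variables with finite alphabets such that X → Y → Z form a Markov chain (X and Z conditionally independent given Y), all relevant probabilities positive, and 0 ≤ q < 1. Then I_q(X;Y) ≥ I_q(X;Z) + (1-q)·∑_{x,y,z} p(x,y,z)·ln_q(p(x,z)/(p(x)p(z)))·ln_q(p(x,y|z)/(p(x|z)p(y|z))), where I_q(U;V) = ∑ p(u,v) ln_q(p(u,v)/(p(u)p(v))). -/

import Mathlib

noncomputable def lnq (q t : ℝ) : ℝ := (t ^ (1 - q) - 1) / (1 - q)


lemma lnq_mul (q : ℝ) (hq : q < 1) {a b : ℝ} (ha : 0 < a) (hb : 0 < b) :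
    lnq q (a * b) = lnq q a + lnq q b + (1 - q) * lnq q a * lnq q b := by
  have hs : (1 : ℝ) - q ≠ 0 := by linarith
  unfold lnq
  rw [Real.mul_rpow ha.le hb.le]
  field_simp
  ring

lemma mul_lnq_ge (q : ℝ) (hq : q < 1) {a b : ℝ} (ha : 0 < a) (hb : 0 < b) :
    a - b ≤ a * lnq q (a / b) := by
  have hs : (0 : ℝ) < 1 - q := by linarith
  have hx : 0 < a / b := div_pos ha hb
  have hber := one_add_mul_self_le_rpow_one_add (s := a / b - 1) (by linarith)
    (p := 1 + (1 - q)) (by linarith)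
  have h1 : (1 : ℝ) + (a / b - 1) = a / b := by ring
  rw [h1, Real.rpow_add hx, Real.rpow_one] at hber
  have h4 := mul_le_mul_of_nonneg_left hber hb.le
  have h3 : b * (a / b * (a / b) ^ (1 - q)) = a * (a / b) ^ (1 - q) := by
    field_simp
  rw [h3] at h4
  have h5 : b * (1 + (1 + (1 - q)) * (a / b - 1)) = a + (1 - q) * (a - b) := by
    field_simp; ring
  rw [h5] at h4
  have : a - b = (a + (1 - q) * (a - b) - a) / (1 - q) := by field_simp; ring
  rw [this]
  have h6 : a * lnq q (a / b) = (a * (a / b) ^ (1 - q) - a) / (1 - q) := by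
    unfold lnq; ring
  rw [h6]
  gcongr

lemma gibbs {ι : Type*} [Fintype ι] (q : ℝ) (hq : q < 1) (P R : ι → ℝ)
    (hP : ∀ i, 0 < P i) (hR : ∀ i, 0 < R i) (hsum : ∑ i, P i = ∑ i, R i) :
    0 ≤ ∑ i, P i * lnq q (P i / R i) := by
  have h : ∑ i, (P i - R i) ≤ ∑ i, P i * lnq q (P i / R i) :=
    Finset.sum_le_sum fun i _ => mul_lnq_ge q hq (hP i) (hR i)
  rwa [Finset.sum_sub_distrib, hsum, sub_self] at h

section
variable {α β γ : Type*} [Fintype α] [Fintype β] [Fintype γ]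

noncomputable def mX (p : α → β → γ → ℝ) (x : α) : ℝ := ∑ y, ∑ z, p x y z
noncomputable def mY (p : α → β → γ → ℝ) (y : β) : ℝ := ∑ x, ∑ z, p x y z
noncomputable def mZ (p : α → β → γ → ℝ) (z : γ) : ℝ := ∑ x, ∑ y, p x y z
noncomputable def mXY (p : α → β → γ → ℝ) (x : α) (y : β) : ℝ := ∑ z, p x y z
noncomputable def mXZ (p : α → β → γ → ℝ) (x : α) (z : γ) : ℝ := ∑ y, p x y z
noncomputable def mYZ (p : α → β → γ → ℝ) (y : β) (z : γ) : ℝ := ∑ x, p x y z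

theorem q_data_processing (q : ℝ) (hq0 : 0 ≤ q) (hq1 : q < 1)
    (p : α → β → γ → ℝ) (hp0 : ∀ x y z, 0 < p x y z)
    (hp1 : ∑ x, ∑ y, ∑ z, p x y z = 1)
    (hMarkov : ∀ x y z, p x y z * mY p y = mXY p x y * mYZ p y z) :
    (∑ x, ∑ y, mXY p x y * lnq q (mXY p x y / (mX p x * mY p y))) ≥
      (∑ x, ∑ z, mXZ p x z * lnq q (mXZ p x z / (mX p x * mZ p z))) +
      (1 - q) * ∑ x, ∑ y, ∑ z, p x y z *
        lnq q (mXZ p x z / (mX p x * mZ p z)) *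
        lnq q ((p x y z / mZ p z) / ((mXZ p x z / mZ p z) * (mYZ p y z / mZ p z))) := by
  -- nonemptiness
  rcases isEmpty_or_nonempty α with h | hα
  · simp at hp1
  rcases isEmpty_or_nonempty β with h | hβ
  · simp at hp1
  rcases isEmpty_or_nonempty γ with h | hγ
  · simp at hp1
  have huα : (Finset.univ : Finset α).Nonempty := Finset.univ_nonempty
  have huβ : (Finset.univ : Finset β).Nonempty := Finset.univ_nonempty
  have huγ : (Finset.univ : Finset γ).Nonempty := Finset.univ_nonempty
  -- positivity of marginals
  have hX : ∀ x, 0 < mX p x := fun x =>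
    Finset.sum_pos (fun y _ => Finset.sum_pos (fun z _ => hp0 x y z) huγ) huβ
  have hY : ∀ y, 0 < mY p y := fun y =>
    Finset.sum_pos (fun x _ => Finset.sum_pos (fun z _ => hp0 x y z) huγ) huα
  have hZ : ∀ z, 0 < mZ p z := fun z =>
    Finset.sum_pos (fun x _ => Finset.sum_pos (fun y _ => hp0 x y z) huβ) huα
  have hXY : ∀ x y, 0 < mXY p x y := fun x y =>
    Finset.sum_pos (fun z _ => hp0 x y z) huγ
  have hXZ : ∀ x z, 0 < mXZ p x z := fun x z =>
    Finset.sum_pos (fun y _ => hp0 x y z) huβ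
  have hYZ : ∀ y z, 0 < mYZ p y z := fun y z =>
    Finset.sum_pos (fun x _ => hp0 x y z) huα
  -- abbreviations
  set A : α → γ → ℝ := fun x z => mXZ p x z / (mX p x * mZ p z) with hA
  set B : α → β → γ → ℝ := fun x y z =>
    (p x y z / mZ p z) / ((mXZ p x z / mZ p z) * (mYZ p y z / mZ p z)) with hB
  have hApos : ∀ x z, 0 < A x z := fun x z =>
    div_pos (hXZ x z) (mul_pos (hX x) (hZ z))
  have hBpos : ∀ x y z, 0 < B x y z := fun x y z =>
    div_pos (div_pos (hp0 x y z) (hZ z))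
      (mul_pos (div_pos (hXZ x z) (hZ z)) (div_pos (hYZ y z) (hZ z)))
  -- B as a quotient
  have hBeq : ∀ x y z, B x y z = p x y z / (mXZ p x z * mYZ p y z / mZ p z) := by
    intro x y z
    have h1 := (hZ z).ne'
    have h2 := (hXZ x z).ne'
    have h3 := (hYZ y z).ne'
    simp only [hB]
    field_simp
  -- key factorization
  have key : ∀ x y z, mXY p x y / (mX p x * mY p y) = A x z * B x y z := by
    intro x y z
    rw [hBeq]
    have h1 := (hZ z).ne'
    have h2 := (hXZ x z).ne'
    have h3 := (hYZ y z).ne'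
    have h4 := (hX x).ne'
    have h5 := (hY y).ne'
    simp only [hA]
    field_simp
    linear_combination (-1 : ℝ) * (hMarkov x y z)
  -- expand LHS
  have e1 : (∑ x, ∑ y, mXY p x y * lnq q (mXY p x y / (mX p x * mY p y)))
      = ∑ x, ∑ y, ∑ z, p x y z * lnq q (mXY p x y / (mX p x * mY p y)) := by
    refine Finset.sum_congr rfl fun x _ => Finset.sum_congr rfl fun y _ => ?_
    rw [mXY, Finset.sum_mul]
  have e2 : ∀ x y z, p x y z * lnq q (mXY p x y / (mX p x * mY p y))
      = p x y z * lnq q (A x z) + p x y z * lnq q (B x y z)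
        + (1 - q) * (p x y z * lnq q (A x z) * lnq q (B x y z)) := by
    intro x y z
    rw [key x y z, lnq_mul q hq1 (hApos x z) (hBpos x y z)]
    ring
  -- T_A equals the XZ sum
  have eA : (∑ x, ∑ y, ∑ z, p x y z * lnq q (A x z))
      = ∑ x, ∑ z, mXZ p x z * lnq q (mXZ p x z / (mX p x * mZ p z)) := by
    refine Finset.sum_congr rfl fun x _ => ?_
    rw [Finset.sum_comm]
    refine Finset.sum_congr rfl fun z _ => ?_
    rw [← Finset.sum_mul]
    rfl
  -- T_B nonneg
  have eB : 0 ≤ ∑ x, ∑ y, ∑ z, p x y z * lnq q (B x y z) := by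
    have hcomm : (∑ x, ∑ y, ∑ z, p x y z * lnq q (B x y z))
        = ∑ z, ∑ x, ∑ y, p x y z * lnq q (B x y z) := by
      calc (∑ x, ∑ y, ∑ z, p x y z * lnq q (B x y z))
          = ∑ x, ∑ z, ∑ y, p x y z * lnq q (B x y z) :=
            Finset.sum_congr rfl fun x _ => Finset.sum_comm
        _ = ∑ z, ∑ x, ∑ y, p x y z * lnq q (B x y z) := Finset.sum_comm
    rw [hcomm]
    refine Finset.sum_nonneg fun z _ => ?_
    have := gibbs (ι := α × β) q hq1 (fun i => p i.1 i.2 z)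
      (fun i => mXZ p i.1 z * mYZ p i.2 z / mZ p z)
      (fun i => hp0 i.1 i.2 z)
      (fun i => div_pos (mul_pos (hXZ i.1 z) (hYZ i.2 z)) (hZ z))
      (by
        rw [Fintype.sum_prod_type, Fintype.sum_prod_type]
        have h1 : (∑ x, ∑ y, mXZ p x z * mYZ p y z / mZ p z)
            = (∑ x, mXZ p x z) * (∑ y, mYZ p y z) / mZ p z := by
          rw [Finset.sum_mul, Finset.sum_div]
          refine Finset.sum_congr rfl fun x _ => ?_
          rw [Finset.mul_sum, Finset.sum_div]
        rw [h1]
        have h2 : (∑ x, mXZ p x z) = mZ p z := by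
          rw [mZ]; exact Finset.sum_congr rfl fun x _ => rfl
        have h3 : (∑ y, mYZ p y z) = mZ p z := by
          rw [mZ, Finset.sum_comm]
          rfl
        rw [h2, h3, mul_div_assoc, div_self (hZ z).ne', mul_one]
        rfl)
    rw [Fintype.sum_prod_type] at this
    refine le_trans this (le_of_eq ?_)
    refine Finset.sum_congr rfl fun x _ => Finset.sum_congr rfl fun y _ => ?_
    rw [hBeq]
  -- assemble
  rw [ge_iff_le, e1]
  have expand : (∑ x, ∑ y, ∑ z, p x y z * lnq q (mXY p x y / (mX p x * mY p y)))
      = (∑ x, ∑ y, ∑ z, p x y z * lnq q (A x z))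
        + (∑ x, ∑ y, ∑ z, p x y z * lnq q (B x y z))
        + (1 - q) * ∑ x, ∑ y, ∑ z, p x y z * lnq q (A x z) * lnq q (B x y z) := by
    rw [Finset.mul_sum]
    rw [← Finset.sum_add_distrib, ← Finset.sum_add_distrib]
    refine Finset.sum_congr rfl fun x _ => ?_
    rw [Finset.mul_sum, ← Finset.sum_add_distrib, ← Finset.sum_add_distrib]
    refine Finset.sum_congr rfl fun y _ => ?_
    rw [Finset.mul_sum, ← Finset.sum_add_distrib, ← Finset.sum_add_distrib]
    exact Finset.sum_congr rfl fun z _ => e2 x y z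
  rw [expand, eA]
  linarith [eB]

end
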